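/- Let a, b, c ∈ R = ℂ[s,t] be homogeneous polynomials of degree n ≥ 1 with gcd(a,b,c) = 1. Then the ℂ-linear map R_{n−1}³ → R_{2n−1} sending (A,B,C) to A·a + B·b + C·c is surjective; equivalently, its kernel Syz(a,b,c)_{n−1} has ℂ-dimension exactly n. -/

import Mathlib

open MvPolynomial

open MvPolynomial

namespace MovingLineAux

open UniqueFactorizationMonoid Module

noncomputable section

local notation "MVP" => MvPolynomial (Fin 2) ℂ

lemma degree_fin2 (d : Fin 2 →₀ ℕ) : d.degree = d 0 + d 1 := by
  rw [Finsupp.degree, ← Fin.sum_univ_two (f := fun i => d i)]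
  exact Finset.sum_subset (Finset.subset_univ _)
    (fun i _ hi => Finsupp.notMem_support_iff.mp hi)

lemma fin2_decomp (d : Fin 2 →₀ ℕ) :
    d = Finsupp.single 0 (d 0) + Finsupp.single 1 (d 1) := by
  ext j; fin_cases j <;> simp [Finsupp.single_apply]

lemma top_comp_ne_zero (q : MVP) (hq : q ≠ 0) :
    homogeneousComponent q.totalDegree q ≠ 0 := by
  obtain ⟨d, hd, hdeg⟩ := Finset.exists_mem_eq_sup q.support
    (support_nonempty.2 hq) (fun s => s.sum fun _ e => e)
  intro h
  have hcoeff := coeff_homogeneousComponent (n := q.totalDegree) d (φ := q)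
  rw [h, coeff_zero] at hcoeff
  have hdd : d.degree = q.totalDegree := by
    rw [Finsupp.degree, MvPolynomial.totalDegree, hdeg]
    simp [Finsupp.sum]
    rfl
  rw [if_pos hdd] at hcoeff
  exact (mem_support_iff.mp hd) hcoeff.symm

lemma homog_mul_comp {n : ℕ} {v : MVP} (q : MVP) (hv : v.IsHomogeneous n) :
    homogeneousComponent (n + q.totalDegree) (v * q)
      = v * homogeneousComponent q.totalDegree q := by
  set D := q.totalDegree with hD
  conv_lhs => rw [← sum_homogeneousComponent q, Finset.mul_sum, map_sum]
  rw [Finset.sum_eq_single D]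
  · rw [homogeneousComponent_of_mem
      ((hv.mul (homogeneousComponent_isHomogeneous D q)) :
        (v * homogeneousComponent D q) ∈ homogeneousSubmodule (Fin 2) ℂ (n + D)),
      if_pos rfl]
  · intro i _ hne
    rw [homogeneousComponent_of_mem
      ((hv.mul (homogeneousComponent_isHomogeneous i q)) :
        (v * homogeneousComponent i q) ∈ homogeneousSubmodule (Fin 2) ℂ (n + i)),
      if_neg (by omega)]
  · intro h
    exact absurd (Finset.self_mem_range_succ D) h

lemma eq_zero_of_dvd_of_lt {m n : ℕ} {v A : MVP}
    (hv : v.IsHomogeneous n) (hv0 : v ≠ 0) (hA : A.IsHomogeneous m) (hmn : m < n)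
    (hdvd : v ∣ A) : A = 0 := by
  by_contra hA0
  obtain ⟨q, rfl⟩ := hdvd
  have hq : q ≠ 0 := by rintro rfl; simp at hA0
  have h1 : homogeneousComponent (n + q.totalDegree) (v * q) = 0 := by
    rw [homogeneousComponent_of_mem (hA : v * q ∈ homogeneousSubmodule (Fin 2) ℂ m),
      if_neg (by omega)]
  rw [homog_mul_comp q hv] at h1
  rcases mul_eq_zero.1 h1 with h | h
  exacts [hv0 h, top_comp_ne_zero q hq h]

lemma not_unit_of_homog {n : ℕ} {u : MVP} (hu : u.IsHomogeneous n) (hn : 0 < n)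
    (h : IsUnit u) : False := by
  have h1 : (1 : MVP) = 0 :=
    eq_zero_of_dvd_of_lt hu h.ne_zero (isHomogeneous_one _ _) hn h.dvd
  exact one_ne_zero h1

/-- exponent of the i-th basis monomial in degree d -/
def expo (d : ℕ) (i : Fin (d + 1)) : Fin 2 →₀ ℕ :=
  Finsupp.single 0 (i : ℕ) + Finsupp.single 1 (d - i)

lemma expo_degree (d : ℕ) (i : Fin (d + 1)) : (expo d i).degree = d := by
  rw [degree_fin2]
  have : (i : ℕ) ≤ d := Nat.lt_succ_iff.mp i.2
  simp [expo, Finsupp.single_apply]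
  omega

lemma expo_inj (d : ℕ) : Function.Injective (expo d) := by
  intro i j h
  have := DFunLike.congr_fun h 0
  simp [expo, Finsupp.single_apply] at this
  exact Fin.ext this

def homogCoeff (d : ℕ) : (homogeneousSubmodule (Fin 2) ℂ d) →ₗ[ℂ] (Fin (d + 1) → ℂ) where
  toFun p := fun i => coeff (expo d i) (p : MVP)
  map_add' p q := by ext i; simp
  map_smul' r p := by ext i; simp

lemma homogCoeff_bij (d : ℕ) : Function.Bijective (homogCoeff d) := by
  constructor
  · intro p q h
    apply Subtype.ext
    ext e
    by_cases he : e.degree = d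
    · have h0 : e 0 ≤ d := by rw [degree_fin2] at he; omega
      have hee : e = expo d ⟨e 0, Nat.lt_succ_of_le h0⟩ := by
        rw [expo]
        conv_lhs => rw [fin2_decomp e]
        congr 2
        simp only [Fin.val_mk]
        rw [degree_fin2] at he
        omega
      rw [hee]
      exact congrFun h ⟨e 0, Nat.lt_succ_of_le h0⟩
    · rw [p.2.coeff_eq_zero he, q.2.coeff_eq_zero he]
  · intro g
    refine ⟨⟨∑ i : Fin (d + 1), monomial (expo d i) (g i), ?_⟩, ?_⟩
    · exact IsHomogeneous.sum _ _ _ (fun i _ => isHomogeneous_monomial _ (expo_degree d i))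
    · ext j
      show coeff (expo d j) (∑ i : Fin (d + 1), monomial (expo d i) (g i)) = g j
      rw [coeff_sum]
      rw [Finset.sum_eq_single j]
      · simp [coeff_monomial]
      · intro i _ hij
        rw [coeff_monomial, if_neg (fun h => hij (expo_inj d h))]
      · intro h; exact absurd (Finset.mem_univ j) h

def homogEquiv (d : ℕ) : (homogeneousSubmodule (Fin 2) ℂ d) ≃ₗ[ℂ] (Fin (d + 1) → ℂ) :=
  LinearEquiv.ofBijective _ (homogCoeff_bij d)

instance (d : ℕ) : FiniteDimensional ℂ (homogeneousSubmodule (Fin 2) ℂ d) :=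
  Module.Finite.equiv (homogEquiv d).symm

lemma finrank_homog (d : ℕ) :
    finrank ℂ (homogeneousSubmodule (Fin 2) ℂ d) = d + 1 := by
  rw [(homogEquiv d).finrank_eq, finrank_fin_fun]

lemma exists_relPrime_comb (u v w : MVP) (hu0 : u ≠ 0)
    (h : ∀ g : MVP, g ∣ u → g ∣ v → g ∣ w → IsUnit g) :
    ∃ l : ℂ, IsRelPrime u (v + C l * w) := by
  classical
  set bad : Set ℂ := {l | ∃ p ∈ factors u, p ∣ v + C l * w} with hbad
  have hfin : bad.Finite := by
    have hsub : bad ⊆ ⋃ p ∈ (factors u).toFinset, {l : ℂ | p ∣ v + C l * w} := by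
      rintro l ⟨p, hp, hpl⟩
      exact Set.mem_biUnion (Multiset.mem_toFinset.2 hp) hpl
    refine Set.Finite.subset (Set.Finite.biUnion ((factors u).toFinset.finite_toSet) ?_) hsub
    intro p hp
    rw [Finset.mem_coe, Multiset.mem_toFinset] at hp
    have hprime : Prime p := prime_of_factor p hp
    have hpu : p ∣ u := dvd_of_mem_factors hp
    by_cases hpw : p ∣ w
    · have hpv : ¬p ∣ v := fun hpv => hprime.not_unit (h p hpu hpv hpw)
      convert Set.finite_empty
      ext l
      simp only [Set.mem_setOf_eq, Set.mem_empty_iff_false, iff_false]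
      intro hd
      exact hpv (by
        have : v = (v + C l * w) - C l * w := by ring
        rw [this]
        exact dvd_sub hd (Dvd.dvd.mul_left hpw _))
    · apply Set.Subsingleton.finite
      intro l1 h1 l2 h2
      by_contra hne
      have hdd : p ∣ (C (l1 - l2) : MVP) * w := by
        have := dvd_sub h1 h2
        have heq : (v + C l1 * w) - (v + C l2 * w) = (C (l1 - l2) : MVP) * w := by
          rw [map_sub]; ring
        rwa [heq] at this
      rcases hprime.dvd_mul.1 hdd with hc | hc
      · exact hprime.not_unit (isUnit_of_dvd_unit hc
          ((isUnit_iff_ne_zero.mpr (sub_ne_zero.2 hne)).map MvPolynomial.C))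
      · exact hpw hc
  obtain ⟨l, hl⟩ := (hfin.infinite_compl).nonempty
  refine ⟨l, fun g hgu hgv => ?_⟩
  by_contra hng
  have hg0 : g ≠ 0 := fun h0 => hu0 (zero_dvd_iff.1 (h0 ▸ hgu))
  obtain ⟨p, hp⟩ := exists_mem_factors hg0 hng
  have hprime := prime_of_factor p hp
  have hpu : p ∣ u := (dvd_of_mem_factors hp).trans hgu
  obtain ⟨q, hq, hass⟩ := exists_mem_factors_of_dvd hu0 hprime.irreducible hpu
  exact hl ⟨q, hq, (hass.dvd_iff_dvd_left).1 ((dvd_of_mem_factors hp).trans hgv)⟩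

lemma pair_surj {n : ℕ} (hn : 1 ≤ n) {u v : MVP}
    (hu : u.IsHomogeneous n) (hv : v.IsHomogeneous n)
    (hu0 : u ≠ 0) (hcop : IsRelPrime u v) (f : MVP) (hf : f.IsHomogeneous (2 * n - 1)) :
    ∃ A B : MVP, A.IsHomogeneous (n - 1) ∧ B.IsHomogeneous (n - 1) ∧ A * u + B * v = f := by
  have hv0 : v ≠ 0 := by
    rintro rfl
    exact not_unit_of_homog hu hn (hcop dvd_rfl (dvd_zero u))
  set W := homogeneousSubmodule (Fin 2) ℂ (n - 1)
  set U := homogeneousSubmodule (Fin 2) ℂ (2 * n - 1)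
  have harith : (n - 1) + n = 2 * n - 1 := by omega
  have hmem : ∀ A B : W, (A : MVP) * u + (B : MVP) * v ∈ U := by
    intro A B
    exact (harith ▸ A.2.mul hu).add (harith ▸ B.2.mul hv)
  let Φ : (W × W) →ₗ[ℂ] U :=
    { toFun := fun p => ⟨(p.1 : MVP) * u + (p.2 : MVP) * v, hmem _ _⟩
      map_add' := by
        intro p q
        apply Subtype.ext
        simp only [Prod.fst_add, Prod.snd_add, Submodule.coe_add]
        push_cast
        ring
      map_smul' := by
        intro r p
        apply Subtype.ext
        simp only [Prod.smul_fst, Prod.smul_snd, Submodule.coe_smul, smul_eq_C_mul,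
          RingHom.id_apply]
        push_cast
        ring }
  have hinj : Function.Injective Φ := by
    intro p q hpq
    have heq : (p.1 : MVP) * u + (p.2 : MVP) * v
        = (q.1 : MVP) * u + (q.2 : MVP) * v := congrArg Subtype.val hpq
    have heq2 : ((p.1 : MVP) - q.1) * u + ((p.2 : MVP) - q.2) * v = 0 := by
      linear_combination heq
    have hdvd : v ∣ ((p.1 : MVP) - q.1) * u := ⟨-((p.2 : MVP) - q.2), by linear_combination heq2⟩
    have hdvdA : v ∣ ((p.1 : MVP) - q.1) := hcop.symm.dvd_of_dvd_mul_right hdvd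
    have hA0 : ((p.1 : MVP) - q.1) = 0 :=
      eq_zero_of_dvd_of_lt hv hv0 (p.1.2.sub q.1.2) (by omega) hdvdA
    have hB0 : ((p.2 : MVP) - q.2) = 0 := by
      have hz : ((p.2 : MVP) - q.2) * v = 0 := by
        rw [hA0] at heq2; simpa using heq2
      exact (mul_eq_zero.1 hz).resolve_right hv0
    have e1 : p.1 = q.1 := Subtype.ext (sub_eq_zero.1 hA0)
    have e2 : p.2 = q.2 := Subtype.ext (sub_eq_zero.1 hB0)
    exact Prod.ext e1 e2
  have hdim : finrank ℂ (W × W) = finrank ℂ U := by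
    rw [finrank_prod, finrank_homog, finrank_homog]
    omega
  have hsurj : Function.Surjective Φ :=
    (LinearMap.injective_iff_surjective_of_finrank_eq_finrank hdim).1 hinj
  obtain ⟨p, hp⟩ := hsurj ⟨f, hf⟩
  refine ⟨p.1, p.2, p.1.2, p.2.2, ?_⟩
  exact congrArg Subtype.val hp

lemma main_surj {n : ℕ} (hn : 1 ≤ n) {a b c : MVP}
    (ha : a.IsHomogeneous n) (hb : b.IsHomogeneous n) (hc : c.IsHomogeneous n)
    (hgcd : ∀ g : MVP, g ∣ a → g ∣ b → g ∣ c → IsUnit g)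
    (f : MVP) (hf : f.IsHomogeneous (2 * n - 1)) :
    ∃ A B C : MVP, A.IsHomogeneous (n - 1) ∧ B.IsHomogeneous (n - 1) ∧
      C.IsHomogeneous (n - 1) ∧ A * a + B * b + C * c = f := by
  have hCmul : ∀ (l : ℂ) (p : MVP) (m : ℕ), p.IsHomogeneous m → (C l * p).IsHomogeneous m :=
    fun l p m hp => by simpa using (isHomogeneous_C (Fin 2) l).mul hp
  by_cases ha0 : a ≠ 0
  · obtain ⟨l, hl⟩ := exists_relPrime_comb a b c ha0 hgcd
    obtain ⟨A, B, hA, hB, hE⟩ := pair_surj hn ha (hb.add (hCmul l c n hc)) ha0 hl f hf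
    exact ⟨A, B, C l * B, hA, hB, hCmul l B _ hB, by linear_combination hE⟩
  push_neg at ha0
  by_cases hb0 : b ≠ 0
  · obtain ⟨l, hl⟩ := exists_relPrime_comb b a c hb0
      (fun g hgb hga hgc => hgcd g hga hgb hgc)
    obtain ⟨A, B, hA, hB, hE⟩ := pair_surj hn hb (ha.add (hCmul l c n hc)) hb0 hl f hf
    exact ⟨B, A, C l * B, hB, hA, hCmul l B _ hB, by linear_combination hE⟩
  push_neg at hb0
  by_cases hc0 : c ≠ 0
  · obtain ⟨l, hl⟩ := exists_relPrime_comb c a b hc0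
      (fun g hgc hga hgb => hgcd g hga hgb hgc)
    obtain ⟨A, B, hA, hB, hE⟩ := pair_surj hn hc (ha.add (hCmul l b n hb)) hc0 hl f hf
    exact ⟨B, C l * B, A, hB, hCmul l B _ hB, hA, by linear_combination hE⟩
  push_neg at hc0
  exfalso
  subst ha0 hb0 hc0
  have := hgcd (X 0) (dvd_zero _) (dvd_zero _) (dvd_zero _)
  exact not_unit_of_homog (isHomogeneous_X ℂ (0 : Fin 2)) one_pos this

end

end MovingLineAux


/-- The degree-`d` graded piece of the syzygy module `Syz(a,b,c) ⊆ R³`, `R = ℂ[s,t]`,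
as a `ℂ`-subspace of `R³`: triples of homogeneous polynomials of degree `d` with
`A·a + B·b + C·c = 0`. -/
noncomputable def syzygyGraded (a b c : MvPolynomial (Fin 2) ℂ) (d : ℕ) :
    Submodule ℂ (Fin 3 → MvPolynomial (Fin 2) ℂ) where
  carrier := {A | (∀ i, A i ∈ homogeneousSubmodule (Fin 2) ℂ d) ∧
    A 0 * a + A 1 * b + A 2 * c = 0}
  add_mem' := by
    rintro A B ⟨hA1, hA2⟩ ⟨hB1, hB2⟩
    refine ⟨fun i => Submodule.add_mem _ (hA1 i) (hB1 i), ?_⟩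
    simp only [Pi.add_apply]
    linear_combination hA2 + hB2
  zero_mem' := by
    exact ⟨fun i => Submodule.zero_mem _, by simp⟩
  smul_mem' := by
    rintro r A ⟨hA1, hA2⟩
    refine ⟨fun i => Submodule.smul_mem _ r (hA1 i), ?_⟩
    simp only [Pi.smul_apply, MvPolynomial.smul_eq_C_mul]
    linear_combination (MvPolynomial.C r) * hA2

set_option synthInstance.maxHeartbeats 1000000 in
set_option maxHeartbeats 1000000 in
/-- For homogeneous `a,b,c` of degree `n ≥ 1` with `gcd(a,b,c)=1`,
the map `R_{n−1}³ → R_{2n−1}`, `(A,B,C) ↦ Aa+Bb+Cc`, is surjective; equivalently, its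
kernel `Syz(a,b,c)_{n−1}` has `ℂ`-dimension exactly `n`. -/
theorem moving_line_map_surjective_and_kernel_dim (n : ℕ) (hn : 1 ≤ n)
    (a b c : MvPolynomial (Fin 2) ℂ)
    (ha : a.IsHomogeneous n) (hb : b.IsHomogeneous n) (hc : c.IsHomogeneous n)
    (hgcd : ∀ g : MvPolynomial (Fin 2) ℂ, g ∣ a → g ∣ b → g ∣ c → IsUnit g) :
    (∀ f : MvPolynomial (Fin 2) ℂ, f.IsHomogeneous (2 * n - 1) →
      ∃ A B C : MvPolynomial (Fin 2) ℂ, A.IsHomogeneous (n - 1) ∧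
        B.IsHomogeneous (n - 1) ∧ C.IsHomogeneous (n - 1) ∧
        A * a + B * b + C * c = f) ∧
    Module.finrank ℂ (syzygyGraded a b c (n - 1)) = n := by
  have hsurj : ∀ f : MvPolynomial (Fin 2) ℂ, f.IsHomogeneous (2 * n - 1) →
      ∃ A B C : MvPolynomial (Fin 2) ℂ, A.IsHomogeneous (n - 1) ∧
        B.IsHomogeneous (n - 1) ∧ C.IsHomogeneous (n - 1) ∧
        A * a + B * b + C * c = f :=
    fun f hf => MovingLineAux.main_surj hn ha hb hc hgcd f hf
  refine ⟨hsurj, ?_⟩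
  classical
  set m := n - 1 with hm
  set W := homogeneousSubmodule (Fin 2) ℂ m with hW
  set U := homogeneousSubmodule (Fin 2) ℂ (2 * n - 1) with hU
  have harith : m + n = 2 * n - 1 := by omega
  have hmem : ∀ g : Fin 3 → W,
      (g 0 : MvPolynomial (Fin 2) ℂ) * a + (g 1 : MvPolynomial (Fin 2) ℂ) * b
        + (g 2 : MvPolynomial (Fin 2) ℂ) * c ∈ U :=
    fun g => ((harith ▸ (g 0).2.mul ha).add (harith ▸ (g 1).2.mul hb)).add
      (harith ▸ (g 2).2.mul hc)
  let L : (Fin 3 → W) →ₗ[ℂ] U :=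
    { toFun := fun g => ⟨_, hmem g⟩
      map_add' := by
        intro g h
        apply Subtype.ext
        simp only [Pi.add_apply, Submodule.coe_add]
        ring
      map_smul' := by
        intro r g
        apply Subtype.ext
        simp only [Pi.smul_apply, Submodule.coe_smul, MvPolynomial.smul_eq_C_mul,
          RingHom.id_apply]
        ring }
  have hrange : LinearMap.range L = ⊤ := by
    rw [LinearMap.range_eq_top]
    rintro ⟨f, hf⟩
    obtain ⟨A, B, C, hA, hB, hC, hE⟩ := hsurj f hf
    refine ⟨![⟨A, hA⟩, ⟨B, hB⟩, ⟨C, hC⟩], Subtype.ext ?_⟩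
    exact hE
  let E : (syzygyGraded a b c m) ≃ₗ[ℂ] LinearMap.ker L :=
    { toFun := fun A => ⟨fun i => ⟨A.1 i, A.2.1 i⟩, Subtype.ext A.2.2⟩
      invFun := fun g => ⟨fun i => (g.1 i : MvPolynomial (Fin 2) ℂ), fun i => (g.1 i).2,
        congrArg Subtype.val g.2⟩
      left_inv := fun A => rfl
      right_inv := fun g => rfl
      map_add' := fun A B => rfl
      map_smul' := fun r A => rfl }
  have hEq : Module.finrank ℂ (syzygyGraded a b c m)
      = Module.finrank ℂ (LinearMap.ker L) := LinearEquiv.finrank_eq E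
  rw [hEq]
  have h1 := LinearMap.finrank_range_add_finrank_ker L
  rw [hrange, finrank_top] at h1
  have hWdim : Module.finrank ℂ W = m + 1 := MovingLineAux.finrank_homog m
  have hdom : Module.finrank ℂ (Fin 3 → W) = 3 * (m + 1) := by
    rw [Module.finrank_pi_fintype]
    simp [hWdim]
  have hUdim : Module.finrank ℂ U = 2 * n := by
    have := MovingLineAux.finrank_homog (2 * n - 1)
    rw [hU, this]
    omega
  rw [hdom, hUdim] at h1
  omega
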